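/- arXiv:2111.01925 — 5 statements merged into one kernel-verified Lean document; each statement's English description precedes it below -/
import Mathlib

section
/- A compact subset A of [0,1] is an attractor of an IFS consisting of n contractions on [0,1] if and only if A × {0}^{d-1} (viewed as a subset of [0,1]^d) is an attractor of an IFS consisting of n contractions on [0,1]^d. -/
open Metric Set Topology Filter TopologicalSpace

noncomputable section

/-- The unit cube `[0,1]^d` with the Euclidean metric. -/
abbrev unitCube (d : ℕ) : Type :=
  {x : EuclideanSpace ℝ (Fin d) // ∀ i, x i ∈ Set.Icc (0:ℝ) 1}

/-- A contraction: a Lipschitz map with constant `< 1`. -/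
def IsContraction {X : Type*} [MetricSpace X] (f : X → X) : Prop :=
  ∃ L : NNReal, L < 1 ∧ LipschitzWith L f

/-- A weak contraction: `d(f x, f y) < d(x, y)` for `x ≠ y`. -/
def IsWeakContraction {X : Type*} [MetricSpace X] (f : X → X) : Prop :=
  ∀ x y, x ≠ y → dist (f x) (f y) < dist x y

/-- `Ld n d`: attractors of IFSs of `n` contractions on `[0,1]^d`,
as a subset of the hyperspace of nonempty compact sets. -/
def Ld (n d : ℕ) : Set (NonemptyCompacts (unitCube d)) :=
  {A | ∃ f : Fin n → unitCube d → unitCube d,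
    (∀ i, IsContraction (f i)) ∧
      (A : Set (unitCube d)) = ⋃ i, f i '' (A : Set (unitCube d))}

/-- `wLd n d`: attractors of systems of `n` weak contractions on `[0,1]^d`. -/
def wLd (n d : ℕ) : Set (NonemptyCompacts (unitCube d)) :=
  {A | ∃ f : Fin n → unitCube d → unitCube d,
    (∀ i, IsWeakContraction (f i)) ∧
      (A : Set (unitCube d)) = ⋃ i, f i '' (A : Set (unitCube d))}

def IFSd (d : ℕ) : Set (NonemptyCompacts (unitCube d)) := ⋃ n, Ld n d

def wIFSd (d : ℕ) : Set (NonemptyCompacts (unitCube d)) := ⋃ n, wLd n d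

/-- The embedding `[0,1] → [0,1]^d`, `a ↦ (a,0,…,0)`. -/
def emb (d : ℕ) (hd : 0 < d) (x : unitCube 1) : unitCube d :=
  ⟨(WithLp.toLp 2 (fun i => if i = (⟨0, hd⟩ : Fin d) then x.1 0 else 0) : EuclideanSpace ℝ (Fin d)),
    fun i => by
      dsimp only
      split_ifs
      · exact x.2 0
      · exact ⟨le_refl 0, zero_le_one⟩⟩

/-- The projection `[0,1]^d → [0,1]` onto the first coordinate. -/
def projL (d : ℕ) (hd : 0 < d) (x : unitCube d) : unitCube 1 :=
  ⟨(WithLp.toLp 2 (fun _ => x.1 ⟨0, hd⟩) : EuclideanSpace ℝ (Fin 1)), fun _ => x.2 ⟨0, hd⟩⟩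


lemma projL_emb (d : ℕ) (hd : 0 < d) (x : unitCube 1) : projL d hd (emb d hd x) = x := by
  apply Subtype.ext
  ext i
  rw [Fin.eq_zero i]
  simp [projL, emb]

lemma unitCube_dist_one (x y : unitCube 1) : dist x y = dist (x.1 0) (y.1 0) := by
  rw [Subtype.dist_eq, EuclideanSpace.dist_eq]
  simp [Real.sqrt_sq_eq_abs, Real.dist_eq]

lemma emb_isometry (d : ℕ) (hd : 0 < d) (x y : unitCube 1) :
    dist (emb d hd x) (emb d hd y) = dist x y := by
  rw [Subtype.dist_eq, EuclideanSpace.dist_eq, unitCube_dist_one]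
  rw [Finset.sum_eq_single (⟨0, hd⟩ : Fin d)]
  · simp [emb, Real.sqrt_sq_eq_abs, Real.dist_eq]
  · intro b _ hb; simp [emb, hb]
  · simp

lemma projL_dist_le (d : ℕ) (hd : 0 < d) (x y : unitCube d) :
    dist (projL d hd x) (projL d hd y) ≤ dist x y := by
  rw [unitCube_dist_one]
  have h0 : dist ((projL d hd x).1 0) ((projL d hd y).1 0) = dist (x.1 ⟨0,hd⟩) (y.1 ⟨0,hd⟩) := rfl
  rw [h0, Subtype.dist_eq, EuclideanSpace.dist_eq]
  have h1 : dist (x.1 ⟨0,hd⟩) (y.1 ⟨0,hd⟩) = Real.sqrt (dist (x.1 ⟨0,hd⟩) (y.1 ⟨0,hd⟩) ^ 2) := by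
    rw [Real.sqrt_sq dist_nonneg]
  rw [h1]
  apply Real.sqrt_le_sqrt
  exact Finset.single_le_sum (f := fun i => dist (x.1 i) (y.1 i) ^ 2)
    (fun i _ => sq_nonneg _) (Finset.mem_univ _)


theorem stmt4 (n d : ℕ) (hn : 0 < n) (hd : 0 < d)
    (A : Set (unitCube 1)) (hA : IsCompact A) (hAne : A.Nonempty) :
    (∃ f : Fin n → unitCube 1 → unitCube 1,
      (∀ i, IsContraction (f i)) ∧ A = ⋃ i, f i '' A) ↔
    (∃ g : Fin n → unitCube d → unitCube d,
      (∀ i, IsContraction (g i)) ∧ emb d hd '' A = ⋃ i, g i '' (emb d hd '' A)) := by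
  constructor
  · rintro ⟨f, hf, hfa⟩
    refine ⟨fun i => emb d hd ∘ f i ∘ projL d hd, fun i => ?_, ?_⟩
    · obtain ⟨L, hL, hLip⟩ := hf i
      refine ⟨L, hL, LipschitzWith.of_dist_le_mul fun x y => ?_⟩
      calc dist ((emb d hd ∘ f i ∘ projL d hd) x) ((emb d hd ∘ f i ∘ projL d hd) y)
          = dist (f i (projL d hd x)) (f i (projL d hd y)) := emb_isometry d hd _ _
        _ ≤ L * dist (projL d hd x) (projL d hd y) := hLip.dist_le_mul _ _
        _ ≤ L * dist x y := by
            exact mul_le_mul_of_nonneg_left (projL_dist_le d hd x y) L.2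
    · have himg : ∀ i, (emb d hd ∘ f i ∘ projL d hd) '' (emb d hd '' A)
          = emb d hd '' (f i '' A) := by
        intro i
        rw [Set.image_image, Set.image_image]
        apply Set.image_congr
        intro a _
        simp [projL_emb]
      calc emb d hd '' A = emb d hd '' (⋃ i, f i '' A) := by rw [← hfa]
        _ = ⋃ i, emb d hd '' (f i '' A) := Set.image_iUnion
        _ = ⋃ i, (emb d hd ∘ f i ∘ projL d hd) '' (emb d hd '' A) := by
            simp only [himg]
  · rintro ⟨g, hg, hga⟩
    refine ⟨fun i => projL d hd ∘ g i ∘ emb d hd, fun i => ?_, ?_⟩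
    · obtain ⟨L, hL, hLip⟩ := hg i
      refine ⟨L, hL, LipschitzWith.of_dist_le_mul fun x y => ?_⟩
      calc dist ((projL d hd ∘ g i ∘ emb d hd) x) ((projL d hd ∘ g i ∘ emb d hd) y)
          ≤ dist (g i (emb d hd x)) (g i (emb d hd y)) := projL_dist_le d hd _ _
        _ ≤ L * dist (emb d hd x) (emb d hd y) := hLip.dist_le_mul _ _
        _ = L * dist x y := by rw [emb_isometry]
    · have hinj : A = projL d hd '' (emb d hd '' A) := by
        rw [Set.image_image]
        simp [projL_emb]
      calc A = projL d hd '' (emb d hd '' A) := hinj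
        _ = projL d hd '' (⋃ i, g i '' (emb d hd '' A)) := by rw [← hga]
        _ = ⋃ i, projL d hd '' (g i '' (emb d hd '' A)) := Set.image_iUnion
        _ = ⋃ i, (projL d hd ∘ g i ∘ emb d hd) '' A := by
            refine Set.iUnion_congr fun i => ?_
            rw [Set.image_image, Set.image_image]
            rfl
end
end

section
/- For every n, d ∈ ℕ, the closure in K([0,1]^d) of the family L_n^d of attractors of IFSs of n contractions equals the closure of the family wL_n^d of attractors of systems of n weak contractions: cl(L_n^d) = cl(wL_n^d). -/
open Metric Set Topology Filter TopologicalSpace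

noncomputable section

/-! ### Auxiliary material -/

lemma normbound {d : ℕ} (u : EuclideanSpace ℝ (Fin d)) (h : ∀ i, |u i| ≤ 1) :
    ‖u‖ ≤ Real.sqrt d := by
  rw [EuclideanSpace.norm_eq]
  apply Real.sqrt_le_sqrt
  calc ∑ i, ‖u i‖ ^ 2 ≤ ∑ _i : Fin d, (1:ℝ) := by
        apply Finset.sum_le_sum
        intro i _
        rw [Real.norm_eq_abs]
        nlinarith [h i, abs_nonneg (u i)]
    _ = d := by simp

instance unitCube.instNonempty (d : ℕ) : Nonempty (unitCube d) :=
  ⟨⟨(WithLp.toLp 2 (fun _ => 0) : EuclideanSpace ℝ (Fin d)), fun _ => ⟨le_rfl, zero_le_one⟩⟩⟩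

instance unitCube.instCompactSpace (d : ℕ) : CompactSpace (unitCube d) := by
  have hc : IsCompact {x : EuclideanSpace ℝ (Fin d) | ∀ i, x i ∈ Set.Icc (0:ℝ) 1} := by
    apply Metric.isCompact_of_isClosed_isBounded
    · have : {x : EuclideanSpace ℝ (Fin d) | ∀ i, x i ∈ Set.Icc (0:ℝ) 1}
          = ⋂ i, (EuclideanSpace.proj (𝕜 := ℝ) i) ⁻¹' Set.Icc (0:ℝ) 1 := by
        ext x; simp [EuclideanSpace.proj]
      rw [this]
      exact isClosed_iInter fun i => isClosed_Icc.preimage (EuclideanSpace.proj i).continuous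
    · rw [Metric.isBounded_iff_subset_closedBall 0]
      refine ⟨Real.sqrt d, fun x hx => ?_⟩
      simp only [Metric.mem_closedBall, dist_zero_right]
      exact normbound x fun i => abs_le.2 ⟨le_trans (by norm_num) (hx i).1, (hx i).2⟩
  exact isCompact_iff_compactSpace.mp hc

/-- Homothety toward the center of the cube with ratio `t ∈ [0,1]`. -/
def hmap {d : ℕ} (t : ℝ) (ht0 : 0 ≤ t) (ht1 : t ≤ 1) (x : unitCube d) : unitCube d :=
  ⟨(WithLp.toLp 2 (fun i => (1 - t) / 2 + t * x.1 i) : EuclideanSpace ℝ (Fin d)), fun i => by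
    have h := x.2 i
    constructor
    · dsimp only; nlinarith [h.1, h.2]
    · dsimp only; nlinarith [h.1, h.2]⟩

lemma hmap_dist {d : ℕ} (t : ℝ) (ht0 : 0 ≤ t) (ht1 : t ≤ 1) (x y : unitCube d) :
    dist (hmap t ht0 ht1 x) (hmap t ht0 ht1 y) = t * dist x y := by
  rw [Subtype.dist_eq, Subtype.dist_eq, dist_eq_norm, dist_eq_norm]
  have : (hmap t ht0 ht1 x).1 - (hmap t ht0 ht1 y).1 = t • (x.1 - y.1) := by
    ext i
    simp [hmap]
    ring
  rw [this, norm_smul, Real.norm_eq_abs, abs_of_nonneg ht0]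

lemma hmap_lipschitz {d : ℕ} (t : ℝ) (ht0 : 0 ≤ t) (ht1 : t ≤ 1) :
    LipschitzWith ⟨t, ht0⟩ (hmap (d := d) t ht0 ht1) :=
  LipschitzWith.of_dist_le_mul fun x y => le_of_eq (hmap_dist t ht0 ht1 x y)

lemma hmap_close {d : ℕ} (t : ℝ) (ht0 : 0 ≤ t) (ht1 : t ≤ 1) (x : unitCube d) :
    dist (hmap t ht0 ht1 x) x ≤ (1 - t) * Real.sqrt d := by
  rw [Subtype.dist_eq, dist_eq_norm]
  set c : EuclideanSpace ℝ (Fin d) := WithLp.toLp 2 (fun i => (1:ℝ)/2 - x.1 i) with hcdef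
  have : (hmap t ht0 ht1 x).1 - x.1 = (1 - t) • c := by
    ext i
    simp [hmap, hcdef]
    ring
  rw [this, norm_smul, Real.norm_eq_abs, abs_of_nonneg (by linarith)]
  have hb : ‖c‖ ≤ Real.sqrt d := by
    apply normbound
    intro i
    have h := x.2 i
    rw [abs_le]
    have hci : c i = 1/2 - x.1 i := rfl
    constructor <;> rw [hci] <;> nlinarith [h.1, h.2]
  nlinarith [Real.sqrt_nonneg (d:ℝ)]

section Hyper

variable {X : Type*} [MetricSpace X] [CompactSpace X] {n : ℕ}

lemma edist_fin (s t : Set X) (hs : s.Nonempty) (ht : t.Nonempty) :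
    EMetric.hausdorffEdist s t ≠ ⊤ :=
  Metric.hausdorffEdist_ne_top_of_nonempty_of_bounded hs ht
    (isCompact_univ.isBounded.subset (Set.subset_univ s))
    (isCompact_univ.isBounded.subset (Set.subset_univ t))

omit [CompactSpace X] in
lemma weak_lipschitz {f : X → X} (hf : IsWeakContraction f) : LipschitzWith 1 f := by
  apply LipschitzWith.of_dist_le_mul
  intro x y
  rcases eq_or_ne x y with rfl | h
  · simp
  · exact le_of_lt (by simpa using hf x y h)

lemma hutDist_le (f : Fin n → X → X) {c : ℝ} (hc : 0 ≤ c)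
    (hf : ∀ i x y, dist (f i x) (f i y) ≤ c * dist x y)
    {K L : Set X} (hKc : IsCompact K) (hK : K.Nonempty) (hLc : IsCompact L) (hL : L.Nonempty) :
    Metric.hausdorffDist (⋃ i, f i '' K) (⋃ i, f i '' L) ≤ c * Metric.hausdorffDist K L := by
  apply Metric.hausdorffDist_le_of_mem_dist (mul_nonneg hc Metric.hausdorffDist_nonneg)
  · rintro u hu
    rcases Set.mem_iUnion.1 hu with ⟨i, x, hx, rfl⟩
    obtain ⟨z, hz, hdz⟩ := hLc.exists_infDist_eq_dist hL x
    refine ⟨f i z, Set.mem_iUnion.2 ⟨i, Set.mem_image_of_mem _ hz⟩, ?_⟩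
    calc dist (f i x) (f i z) ≤ c * dist x z := hf i x z
      _ ≤ c * Metric.hausdorffDist K L := by
          apply mul_le_mul_of_nonneg_left _ hc
          rw [← hdz]
          exact Metric.infDist_le_hausdorffDist_of_mem hx (edist_fin K L hK hL)
  · rintro u hu
    rcases Set.mem_iUnion.1 hu with ⟨i, x, hx, rfl⟩
    obtain ⟨z, hz, hdz⟩ := hKc.exists_infDist_eq_dist hK x
    refine ⟨f i z, Set.mem_iUnion.2 ⟨i, Set.mem_image_of_mem _ hz⟩, ?_⟩
    calc dist (f i x) (f i z) ≤ c * dist x z := hf i x z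
      _ ≤ c * Metric.hausdorffDist K L := by
          apply mul_le_mul_of_nonneg_left _ hc
          rw [← hdz, Metric.hausdorffDist_comm]
          exact Metric.infDist_le_hausdorffDist_of_mem hx (edist_fin L K hL hK)

omit [CompactSpace X] in
lemma hutDist_pert (f g : Fin n → X → X) {ε : ℝ} (hε : 0 ≤ ε)
    (h : ∀ i x, dist (f i x) (g i x) ≤ ε) (K : Set X) :
    Metric.hausdorffDist (⋃ i, f i '' K) (⋃ i, g i '' K) ≤ ε := by
  apply Metric.hausdorffDist_le_of_mem_dist hε
  · rintro u hu
    rcases Set.mem_iUnion.1 hu with ⟨i, x, hx, rfl⟩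
    exact ⟨g i x, Set.mem_iUnion.2 ⟨i, Set.mem_image_of_mem _ hx⟩, h i x⟩
  · rintro u hu
    rcases Set.mem_iUnion.1 hu with ⟨i, x, hx, rfl⟩
    exact ⟨f i x, Set.mem_iUnion.2 ⟨i, Set.mem_image_of_mem _ hx⟩,
      (dist_comm (f i x) (g i x) ▸ h i x)⟩

lemma hutDist_strict (hn : 0 < n) (f : Fin n → X → X) (hf : ∀ i, IsWeakContraction (f i))
    {K L : Set X} (hKc : IsCompact K) (hK : K.Nonempty) (hLc : IsCompact L) (hL : L.Nonempty)
    (ht : 0 < Metric.hausdorffDist K L) :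
    Metric.hausdorffDist (⋃ i, f i '' K) (⋃ i, f i '' L) < Metric.hausdorffDist K L := by
  set t := Metric.hausdorffDist K L with htdef
  set FK := ⋃ i, f i '' K with hFK
  set FL := ⋃ i, f i '' L with hFL
  have hcont : ∀ i, Continuous (f i) := fun i => (weak_lipschitz (hf i)).continuous
  have hFKc : IsCompact FK := isCompact_iUnion fun i => hKc.image (hcont i)
  have hFLc : IsCompact FL := isCompact_iUnion fun i => hLc.image (hcont i)
  have hFKne : FK.Nonempty := by
    obtain ⟨x, hx⟩ := hK
    exact ⟨f ⟨0, hn⟩ x, Set.mem_iUnion.2 ⟨⟨0, hn⟩, Set.mem_image_of_mem _ hx⟩⟩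
  have hFLne : FL.Nonempty := by
    obtain ⟨x, hx⟩ := hL
    exact ⟨f ⟨0, hn⟩ x, Set.mem_iUnion.2 ⟨⟨0, hn⟩, Set.mem_image_of_mem _ hx⟩⟩
  have key1 : ∀ u ∈ FK, Metric.infDist u FL < t := by
    rintro u hu
    rcases Set.mem_iUnion.1 hu with ⟨i, x, hx, rfl⟩
    obtain ⟨z, hz, hdz⟩ := hLc.exists_infDist_eq_dist hL x
    have hxz : dist x z ≤ t := by
      rw [← hdz]
      exact Metric.infDist_le_hausdorffDist_of_mem hx (edist_fin K L hK hL)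
    have hfz : f i z ∈ FL := Set.mem_iUnion.2 ⟨i, Set.mem_image_of_mem _ hz⟩
    rcases eq_or_ne x z with rfl | hne
    · calc Metric.infDist (f i x) FL ≤ dist (f i x) (f i x) := Metric.infDist_le_dist_of_mem hfz
        _ = 0 := by simp
        _ < t := ht
    · calc Metric.infDist (f i x) FL ≤ dist (f i x) (f i z) := Metric.infDist_le_dist_of_mem hfz
        _ < dist x z := hf i x z hne
        _ ≤ t := hxz
  have key2 : ∀ u ∈ FL, Metric.infDist u FK < t := by
    rintro u hu
    rcases Set.mem_iUnion.1 hu with ⟨i, x, hx, rfl⟩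
    obtain ⟨z, hz, hdz⟩ := hKc.exists_infDist_eq_dist hK x
    have hxz : dist x z ≤ t := by
      rw [← hdz, htdef, Metric.hausdorffDist_comm]
      exact Metric.infDist_le_hausdorffDist_of_mem hx (edist_fin L K hL hK)
    have hfz : f i z ∈ FK := Set.mem_iUnion.2 ⟨i, Set.mem_image_of_mem _ hz⟩
    rcases eq_or_ne x z with rfl | hne
    · calc Metric.infDist (f i x) FK ≤ dist (f i x) (f i x) := Metric.infDist_le_dist_of_mem hfz
        _ = 0 := by simp
        _ < t := ht
    · calc Metric.infDist (f i x) FK ≤ dist (f i x) (f i z) := Metric.infDist_le_dist_of_mem hfz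
        _ < dist x z := hf i x z hne
        _ ≤ t := hxz
  obtain ⟨u1, hu1, hmax1⟩ := hFKc.exists_isMaxOn hFKne
    ((Metric.continuous_infDist_pt FL).continuousOn)
  obtain ⟨u2, hu2, hmax2⟩ := hFLc.exists_isMaxOn hFLne
    ((Metric.continuous_infDist_pt FK).continuousOn)
  set m := max (Metric.infDist u1 FL) (Metric.infDist u2 FK) with hm
  have hmt : m < t := max_lt (key1 u1 hu1) (key2 u2 hu2)
  have hbound : Metric.hausdorffDist FK FL ≤ m := by
    apply Metric.hausdorffDist_le_of_mem_dist
      (le_trans Metric.infDist_nonneg (le_max_left _ _))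
    · rintro u hu
      obtain ⟨y, hy, hdy⟩ := hFLc.exists_infDist_eq_dist hFLne u
      exact ⟨y, hy, by rw [← hdy]; exact le_trans (hmax1 hu) (le_max_left _ _)⟩
    · rintro u hu
      obtain ⟨y, hy, hdy⟩ := hFKc.exists_infDist_eq_dist hFKne u
      exact ⟨y, hy, by rw [← hdy]; exact le_trans (hmax2 hu) (le_max_right _ _)⟩
  exact lt_of_le_of_lt hbound hmt

/-- The Hutchinson operator on the hyperspace. -/
def hutN (hn : 0 < n) (f : Fin n → X → X) (hc : ∀ i, Continuous (f i))
    (K : NonemptyCompacts X) : NonemptyCompacts X :=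
  ⟨⟨⋃ i, f i '' (K : Set X), isCompact_iUnion fun i => K.isCompact.image (hc i)⟩, by
    obtain ⟨x, hx⟩ := K.nonempty
    exact ⟨f ⟨0, hn⟩ x, Set.mem_iUnion.2 ⟨⟨0, hn⟩, Set.mem_image_of_mem _ hx⟩⟩⟩

lemma hutN_coe (hn : 0 < n) (f : Fin n → X → X) (hc : ∀ i, Continuous (f i))
    (K : NonemptyCompacts X) :
    (hutN hn f hc K : Set X) = ⋃ i, f i '' (K : Set X) := rfl

instance [Nonempty X] : Nonempty (NonemptyCompacts X) :=
  ⟨⟨⟨{Classical.arbitrary X}, isCompact_singleton⟩, Set.singleton_nonempty _⟩⟩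

end Hyper

lemma tseq_nonneg (k : ℕ) : 0 ≤ 1 - 1/((k:ℝ)+1) := by
  have hk : (1:ℝ) ≤ (k:ℝ) + 1 := by
    have : (0:ℝ) ≤ (k:ℝ) := Nat.cast_nonneg k
    linarith
  have : 1/((k:ℝ)+1) ≤ 1 := by
    rw [div_le_one (by linarith)]
    exact hk
  linarith

lemma tseq_le_one (k : ℕ) : 1 - 1/((k:ℝ)+1) ≤ 1 := by
  have : 0 < 1/((k:ℝ)+1) := by positivity
  linarith

lemma wLd_subset_closure (n d : ℕ) (hn : 0 < n) : wLd n d ⊆ closure (Ld n d) := by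
  rintro A ⟨f, hf, hA⟩
  have hcont : ∀ i, Continuous (f i) := fun i => (weak_lipschitz (hf i)).continuous
  set F := hutN hn f hcont with hFdef
  have hAfix : F A = A := by
    apply NonemptyCompacts.ext
    rw [hFdef, hutN_coe]
    exact hA.symm
  set g : ℕ → Fin n → unitCube d → unitCube d :=
    fun k i => hmap _ (tseq_nonneg k) (tseq_le_one k) ∘ f i with hgdef
  have hglip : ∀ (k : ℕ) (i : Fin n), LipschitzWith ⟨1 - 1/((k:ℝ)+1), tseq_nonneg k⟩ (g k i) := by
    intro k i
    have h := (hmap_lipschitz _ (tseq_nonneg k) (tseq_le_one k)).comp (weak_lipschitz (hf i))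
    exact h.weaken (mul_one _).le
  have hgcont : ∀ (k : ℕ) (i : Fin n), Continuous (g k i) := fun k i => (hglip k i).continuous
  set Fk : ℕ → NonemptyCompacts (unitCube d) → NonemptyCompacts (unitCube d) :=
    fun k => hutN hn (g k) (hgcont k) with hFkdef
  have hlt1 : ∀ k : ℕ, (⟨1 - 1/((k:ℝ)+1), tseq_nonneg k⟩ : NNReal) < 1 := by
    intro k
    refine NNReal.coe_lt_coe.mp ?_
    have : 0 < 1/((k:ℝ)+1) := by positivity
    show 1 - 1/((k:ℝ)+1) < (1 : NNReal)
    rw [NNReal.coe_one]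
    linarith
  have hcontr : ∀ k : ℕ, ContractingWith ⟨1 - 1/((k:ℝ)+1), tseq_nonneg k⟩ (Fk k) := by
    intro k
    refine ⟨hlt1 k, ?_⟩
    apply LipschitzWith.of_dist_le_mul
    intro K L
    rw [NonemptyCompacts.dist_eq, NonemptyCompacts.dist_eq]
    exact hutDist_le (g k) (tseq_nonneg k) (fun i x y => (hglip k i).dist_le_mul x y)
      K.isCompact K.nonempty L.isCompact L.nonempty
  set B : ℕ → NonemptyCompacts (unitCube d) :=
    fun k => ContractingWith.fixedPoint (Fk k) (hcontr k) with hBdef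
  have hBfix : ∀ k : ℕ, Fk k (B k) = B k := fun k => (hcontr k).fixedPoint_isFixedPt
  have hBmem : ∀ k : ℕ, B k ∈ Ld n d := by
    intro k
    refine ⟨g k, fun i => ⟨_, hlt1 k, hglip k i⟩, ?_⟩
    conv_lhs => rw [← hBfix k]
    rfl
  obtain ⟨C, -, φ, hφ, hC⟩ := isCompact_univ.tendsto_subseq (fun k => Set.mem_univ (B k))
  have hstep : ∀ k : ℕ, dist (F C) C ≤ 2 * dist (B k) C + (1/((k:ℝ)+1)) * Real.sqrt d := by
    intro k
    have h1 : dist (F C) (F (B k)) ≤ dist C (B k) := by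
      rw [NonemptyCompacts.dist_eq, NonemptyCompacts.dist_eq]
      have h := hutDist_le f zero_le_one
        (fun i x y => by simpa using (weak_lipschitz (hf i)).dist_le_mul x y)
        C.isCompact C.nonempty (B k).isCompact (B k).nonempty
      simpa [hFdef, hutN_coe] using h
    have h2 : dist (F (B k)) (Fk k (B k)) ≤ (1/((k:ℝ)+1)) * Real.sqrt d := by
      rw [NonemptyCompacts.dist_eq]
      apply hutDist_pert f (g k) (by positivity)
      intro i x
      have h := hmap_close (1 - 1/((k:ℝ)+1)) (tseq_nonneg k) (tseq_le_one k) (f i x)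
      rw [dist_comm] at h
      calc dist (f i x) (g k i x) ≤ (1 - (1 - 1/((k:ℝ)+1))) * Real.sqrt d := h
        _ = (1/((k:ℝ)+1)) * Real.sqrt d := by ring
    have h3 : dist (Fk k (B k)) C = dist (B k) C := by rw [hBfix k]
    have h4 := dist_triangle (F C) (F (B k)) C
    have h5 := dist_triangle (F (B k)) (Fk k (B k)) C
    have h6 : dist C (B k) = dist (B k) C := dist_comm C (B k)
    linarith
  have l1 : Tendsto (fun j => dist (B (φ j)) C) atTop (𝓝 0) := by
    have := tendsto_iff_dist_tendsto_zero.mp hC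
    exact this
  have l2 : Tendsto (fun j => 1/(((φ j : ℕ):ℝ)+1)) atTop (𝓝 0) := by
    have base : Tendsto (fun k : ℕ => 1/((k:ℝ)+1)) atTop (𝓝 0) :=
      tendsto_one_div_add_atTop_nhds_zero_nat
    exact base.comp hφ.tendsto_atTop
  have hlim : Tendsto (fun j => 2 * dist (B (φ j)) C + (1/(((φ j : ℕ):ℝ)+1)) * Real.sqrt d)
      atTop (𝓝 0) := by
    have := (l1.const_mul 2).add (l2.mul_const (Real.sqrt d))
    simpa using this
  have hFC : F C = C := by
    have hle : dist (F C) C ≤ 0 := ge_of_tendsto' hlim (fun j => hstep (φ j))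
    exact dist_le_zero.mp hle
  have hCA : C = A := by
    by_contra hne
    have hpos : 0 < dist C A := dist_pos.2 hne
    have hstrict : dist (F C) (F A) < dist C A := by
      rw [NonemptyCompacts.dist_eq, NonemptyCompacts.dist_eq]
      exact hutDist_strict hn f hf C.isCompact C.nonempty A.isCompact A.nonempty
        (by rwa [NonemptyCompacts.dist_eq] at hpos)
    rw [hFC, hAfix] at hstrict
    exact lt_irrefl _ hstrict
  rw [← hCA]
  exact mem_closure_of_tendsto hC (Filter.Eventually.of_forall fun j => hBmem (φ j))

theorem stmt11 (n d : ℕ) (hn : 0 < n) (hd : 0 < d) :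
    closure (Ld n d) = closure (wLd n d) := by
  apply subset_antisymm
  · apply closure_mono
    rintro A ⟨f, hf, hA⟩
    refine ⟨f, fun i x y hxy => ?_, hA⟩
    obtain ⟨L, hL, hLip⟩ := hf i
    have h0 : 0 < dist x y := dist_pos.2 hxy
    have hL' : (L:ℝ) < 1 := NNReal.coe_lt_one.2 hL
    calc dist (f i x) (f i y) ≤ L * dist x y := hLip.dist_le_mul x y
      _ < dist x y := by nlinarith [NNReal.coe_nonneg L]
  · calc closure (wLd n d) ⊆ closure (closure (Ld n d)) :=
        closure_mono (wLd_subset_closure n d hn)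
      _ = closure (Ld n d) := closure_closure
end
end

section
/- In particular, L_{n+1}^d ⊋ L_n^d and wL_{n+1}^d ⊋ wL_n^d for every n, d ∈ ℕ: the hierarchy of attractors by number of maps is strictly increasing. -/
open Metric Set Topology Filter TopologicalSpace

noncomputable section

namespace Stmt14Aux

variable (n d : ℕ)


def pt (hn : 0 < n) (hd : 0 < d) (k : ℕ) : unitCube d :=
  ⟨(WithLp.toLp 2 (fun i => if i = (⟨0, hd⟩ : Fin d) then ((min k n : ℕ) : ℝ) / n else 0) :
      EuclideanSpace ℝ (Fin d)),
    fun i => by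
      dsimp only
      split_ifs
      · constructor
        · positivity
        · rw [div_le_one (by exact_mod_cast hn)]
          exact_mod_cast Nat.min_le_right k n
      · exact ⟨le_refl 0, zero_le_one⟩⟩

lemma dist_pt (hn : 0 < n) (hd : 0 < d) (a b : ℕ) :
    dist (pt n d hn hd a) (pt n d hn hd b) =
      |((min a n : ℕ) : ℝ) / n - ((min b n : ℕ) : ℝ) / n| := by
  rw [Subtype.dist_eq, EuclideanSpace.dist_eq]
  have h : ∀ i : Fin d,
      dist ((pt n d hn hd a).1 i) ((pt n d hn hd b).1 i) ^ 2 =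
        if i = (⟨0, hd⟩ : Fin d) then
          (((min a n : ℕ) : ℝ) / n - ((min b n : ℕ) : ℝ) / n) ^ 2 else 0 := by
    intro i
    by_cases hi : i = (⟨0, hd⟩ : Fin d) <;>
      simp [pt, hi, Real.dist_eq, sq_abs]
  rw [Finset.sum_congr rfl fun i _ => h i]
  rw [Finset.sum_ite_eq' Finset.univ (⟨0, hd⟩ : Fin d)
    (fun _ => (((min a n : ℕ) : ℝ) / n - ((min b n : ℕ) : ℝ) / n) ^ 2)]
  simp [Real.sqrt_sq_eq_abs]

lemma pt_min (hn : 0 < n) (hd : 0 < d) (k : ℕ) :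
    pt n d hn hd k = pt n d hn hd (min k n) := by
  unfold pt
  congr 2
  rw [min_eq_left (min_le_right k n)]

lemma pt_inj (hn : 0 < n) (hd : 0 < d) {a b : ℕ}
    (h : pt n d hn hd a = pt n d hn hd b) : min a n = min b n := by
  have h0 := congrArg (fun x : unitCube d => x.1 (⟨0, hd⟩ : Fin d)) h
  simp only [pt, WithLp.ofLp_toLp, if_pos rfl, eq_self_iff_true, if_true] at h0
  have hn' : (n : ℝ) ≠ 0 := by exact_mod_cast hn.ne'
  field_simp at h0
  exact_mod_cast h0

lemma one_le_abs_sub {a b : ℕ} (h : a ≠ b) : (1 : ℝ) ≤ |(a : ℝ) - (b : ℝ)| := by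
  have h1 : (1 : ℤ) ≤ |(a : ℤ) - (b : ℤ)| := by
    rcases abs_cases ((a : ℤ) - (b : ℤ)) with ⟨h1, h2⟩ | ⟨h1, h2⟩ <;> omega
  have h2 : ((1 : ℤ) : ℝ) ≤ ((|(a : ℤ) - (b : ℤ)| : ℤ) : ℝ) := by exact_mod_cast h1
  push_cast at h2
  simpa using h2

/-- Distinct points of the progression are at distance at least `1/n`. -/
lemma one_div_le_dist_pt (hn : 0 < n) (hd : 0 < d) {a b : ℕ}
    (h : pt n d hn hd a ≠ pt n d hn hd b) :
    1 / (n : ℝ) ≤ dist (pt n d hn hd a) (pt n d hn hd b) := by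
  have hne : min a n ≠ min b n := fun hc => h (by
    rw [pt_min n d hn hd a, pt_min n d hn hd b, hc])
  rw [dist_pt, div_sub_div_same, abs_div,
    abs_of_pos (show (0:ℝ) < n by exact_mod_cast hn)]
  rw [div_le_div_iff_of_pos_right (show (0:ℝ) < n by exact_mod_cast hn)]
  exact one_le_abs_sub hne

lemma dist_pt_succ (hn : 0 < n) (hd : 0 < d) {k : ℕ} (hk : k < n) :
    dist (pt n d hn hd (k+1)) (pt n d hn hd k) = 1 / (n : ℝ) := by
  rw [dist_pt, min_eq_left (by omega), min_eq_left (by omega),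
    div_sub_div_same]
  push_cast
  rw [add_sub_cancel_left]
  rw [abs_of_pos (by positivity)]

def witness (hn : 0 < n) (hd : 0 < d) : NonemptyCompacts (unitCube d) :=
  ⟨⟨Set.range (pt n d hn hd),
    (Set.Finite.subset ((Set.finite_Iic n).image (pt n d hn hd)) (by
      rintro x ⟨k, rfl⟩
      exact ⟨min k n, Set.mem_Iic.2 (min_le_right _ _), (pt_min n d hn hd k).symm⟩)).isCompact⟩,
   ⟨pt n d hn hd 0, Set.mem_range_self 0⟩⟩

lemma coe_witness (hn : 0 < n) (hd : 0 < d) :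
    (witness n d hn hd : Set (unitCube d)) = Set.range (pt n d hn hd) := rfl

lemma witness_eq_iUnion (hn : 0 < n) (hd : 0 < d) :
    (witness n d hn hd : Set (unitCube d)) =
      ⋃ i : Fin (n+1), (fun _ : unitCube d => pt n d hn hd (i : ℕ)) ''
        (witness n d hn hd : Set (unitCube d)) := by
  rw [coe_witness]
  ext x
  simp only [Set.mem_iUnion]
  constructor
  · rintro ⟨k, rfl⟩
    refine ⟨⟨min k n, by omega⟩, pt n d hn hd 0, Set.mem_range_self 0, ?_⟩
    show pt n d hn hd (min k n) = pt n d hn hd k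
    exact (pt_min n d hn hd k).symm
  · rintro ⟨i, y, -, rfl⟩
    exact ⟨(i : ℕ), rfl⟩


lemma witness_mem_Ld (hn : 0 < n) (hd : 0 < d) :
    witness n d hn hd ∈ Ld (n+1) d := by
  refine ⟨fun i => fun _ => pt n d hn hd (i : ℕ), fun i => ?_, witness_eq_iUnion n d hn hd⟩
  exact ⟨0, zero_lt_one, LipschitzWith.const _⟩

lemma witness_mem_wLd (hn : 0 < n) (hd : 0 < d) :
    witness n d hn hd ∈ wLd (n+1) d := by
  refine ⟨fun i => fun _ => pt n d hn hd (i : ℕ), fun i => ?_, witness_eq_iUnion n d hn hd⟩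
  intro x y hxy
  simpa using dist_pos.2 hxy

lemma witness_not_mem_wLd (hn : 0 < n) (hd : 0 < d) :
    witness n d hn hd ∉ wLd n d := by
  rintro ⟨f, hw, hU⟩
  rw [coe_witness] at hU
  have himg : ∀ i : Fin n, f i '' Set.range (pt n d hn hd) ⊆ Set.range (pt n d hn hd) := by
    intro i
    have h1 := Set.subset_iUnion (fun j : Fin n => f j '' Set.range (pt n d hn hd)) i
    rw [← hU] at h1
    exact h1
  -- adjacent points have equal images
  have hstep : ∀ i : Fin n, ∀ k : ℕ, k < n →
      f i (pt n d hn hd (k+1)) = f i (pt n d hn hd k) := by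
    intro i k hk
    by_contra hne
    obtain ⟨a, ha⟩ := himg i ⟨pt n d hn hd (k+1), Set.mem_range_self _, rfl⟩
    obtain ⟨b, hb⟩ := himg i ⟨pt n d hn hd k, Set.mem_range_self _, rfl⟩
    have hxy : pt n d hn hd (k+1) ≠ pt n d hn hd k := by
      intro hc
      have := pt_inj n d hn hd hc
      rw [min_eq_left (by omega), min_eq_left (by omega)] at this
      omega
    have hlt := hw i _ _ hxy
    rw [dist_pt_succ n d hn hd hk] at hlt
    have hge : 1 / (n : ℝ) ≤ dist (f i (pt n d hn hd (k+1))) (f i (pt n d hn hd k)) := by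
      rw [← ha, ← hb]
      exact one_div_le_dist_pt n d hn hd (by rw [ha, hb]; exact hne)
    exact absurd (lt_of_le_of_lt hge hlt) (lt_irrefl _)
  -- each f i is constant on the witness set
  have hconst : ∀ i : Fin n, ∀ x ∈ Set.range (pt n d hn hd),
      f i x = f i (pt n d hn hd 0) := by
    intro i x hx
    obtain ⟨k, rfl⟩ := hx
    rw [pt_min n d hn hd k]
    have key : ∀ m : ℕ, m ≤ n → f i (pt n d hn hd m) = f i (pt n d hn hd 0) := by
      intro m
      induction m with
      | zero => intro _; rfl
      | succ m ih =>
          intro hm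
          rw [hstep i m (by omega), ih (by omega)]
    exact key _ (min_le_right k n)
  -- pigeonhole
  have hF : ∀ j : Fin (n+1), ∃ i : Fin n,
      pt n d hn hd (j : ℕ) = f i (pt n d hn hd 0) := by
    intro j
    have hj : pt n d hn hd (j : ℕ) ∈ Set.range (pt n d hn hd) := Set.mem_range_self _
    rw [hU, Set.mem_iUnion] at hj
    obtain ⟨i, y, hy, hxy⟩ := hj
    exact ⟨i, by rw [← hxy, hconst i y hy]⟩
  choose F hFeq using hF
  have hcard : Fintype.card (Fin n) < Fintype.card (Fin (n+1)) := by simp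
  obtain ⟨j, j', hjj, hEq⟩ := Fintype.exists_ne_map_eq_of_card_lt F hcard
  apply hjj
  have hpt : pt n d hn hd (j : ℕ) = pt n d hn hd (j' : ℕ) := by
    rw [hFeq j, hFeq j', hEq]
  have hmin := pt_inj n d hn hd hpt
  have h1 : (j : ℕ) < n + 1 := j.isLt
  have h2 : (j' : ℕ) < n + 1 := j'.isLt
  exact Fin.ext (by omega)

lemma Ld_subset_wLd : Ld n d ⊆ wLd n d := by
  rintro A ⟨f, hf, hU⟩
  refine ⟨f, fun i => ?_, hU⟩
  obtain ⟨L, hL, hLip⟩ := hf i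
  intro x y hxy
  calc dist (f i x) (f i y) ≤ L * dist x y := hLip.dist_le_mul x y
    _ < 1 * dist x y := by
        apply mul_lt_mul_of_pos_right ?_ (dist_pos.2 hxy)
        exact_mod_cast hL
    _ = dist x y := one_mul _

lemma Ld_mono (hn : 0 < n) : Ld n d ⊆ Ld (n+1) d := by
  rintro A ⟨f, hf, hU⟩
  refine ⟨fun i => if h : (i : ℕ) < n then f ⟨i, h⟩ else f ⟨0, hn⟩, fun i => ?_, ?_⟩
  · dsimp only; split_ifs <;> apply hf
  · conv_lhs => rw [hU]
    ext x
    simp only [Set.mem_iUnion]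
    constructor
    · rintro ⟨i, hx⟩
      refine ⟨⟨(i : ℕ), by omega⟩, ?_⟩
      simp only [Fin.val_mk, dif_pos i.isLt, Fin.eta]
      exact hx
    · rintro ⟨i, hx⟩
      by_cases h : (i : ℕ) < n
      · rw [dif_pos h] at hx
        exact ⟨⟨(i : ℕ), h⟩, hx⟩
      · rw [dif_neg h] at hx
        exact ⟨⟨0, hn⟩, hx⟩

lemma wLd_mono (hn : 0 < n) : wLd n d ⊆ wLd (n+1) d := by
  rintro A ⟨f, hf, hU⟩
  refine ⟨fun i => if h : (i : ℕ) < n then f ⟨i, h⟩ else f ⟨0, hn⟩, fun i => ?_, ?_⟩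
  · dsimp only; split_ifs <;> apply hf
  · conv_lhs => rw [hU]
    ext x
    simp only [Set.mem_iUnion]
    constructor
    · rintro ⟨i, hx⟩
      refine ⟨⟨(i : ℕ), by omega⟩, ?_⟩
      simp only [Fin.val_mk, dif_pos i.isLt, Fin.eta]
      exact hx
    · rintro ⟨i, hx⟩
      by_cases h : (i : ℕ) < n
      · rw [dif_pos h] at hx
        exact ⟨⟨(i : ℕ), h⟩, hx⟩
      · rw [dif_neg h] at hx
        exact ⟨⟨0, hn⟩, hx⟩

end Stmt14Aux

theorem stmt14 (n d : ℕ) (hn : 0 < n) (hd : 0 < d) :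
    Ld n d ⊂ Ld (n + 1) d ∧ wLd n d ⊂ wLd (n + 1) d := by
  have hwit : Stmt14Aux.witness n d hn hd ∉ wLd n d := Stmt14Aux.witness_not_mem_wLd n d hn hd
  constructor
  · rw [Set.ssubset_def]
    refine ⟨Stmt14Aux.Ld_mono n d hn, fun hsub => ?_⟩
    exact hwit (Stmt14Aux.Ld_subset_wLd n d (hsub (Stmt14Aux.witness_mem_Ld n d hn hd)))
  · rw [Set.ssubset_def]
    refine ⟨Stmt14Aux.wLd_mono n d hn, fun hsub => ?_⟩
    exact hwit (hsub (Stmt14Aux.witness_mem_wLd n d hn hd))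
end
end

section
/- For every d ∈ ℕ there exists a compact set X ⊆ [0,1]^d that is an attractor of a system of 2 weak contractions but is not an attractor of any (finite) IFS of genuine contractions: wL_2^d \ IFS^d ≠ ∅. -/
open Metric Set Topology Filter TopologicalSpace

noncomputable section

namespace S15


def xseq (m : ℕ) : ℝ := Real.log 2 / Real.log (m + 2)

def F (r : ℝ) : ℝ :=
  if r ≤ 0 then 0 else Real.log 2 / Real.log (Real.exp (Real.log 2 / r) + 1)

lemma l2pos : 0 < Real.log 2 := Real.log_pos one_lt_two

lemma logm2_pos (m : ℕ) : 0 < Real.log (m + 2) := by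
  apply Real.log_pos; linarith [Nat.cast_nonneg (α := ℝ) m]

lemma xseq_pos (m : ℕ) : 0 < xseq m := div_pos l2pos (logm2_pos m)

lemma xseq_le_one (m : ℕ) : xseq m ≤ 1 := by
  rw [xseq, div_le_one (logm2_pos m)]
  apply Real.log_le_log (by norm_num); linarith [Nat.cast_nonneg (α := ℝ) m]

lemma xseq_mem (m : ℕ) : xseq m ∈ Set.Icc (0:ℝ) 1 := ⟨(xseq_pos m).le, xseq_le_one m⟩

lemma xseq_zero : xseq 0 = 1 := by
  simp [xseq]; norm_num

lemma xseq_strictAnti : StrictAnti xseq := by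
  intro a b hab
  apply div_lt_div_of_pos_left l2pos (logm2_pos a)
  apply Real.log_lt_log (by positivity)
  have : (a:ℝ) < b := by exact_mod_cast hab
  linarith

lemma xseq_anti {a b : ℕ} (h : a ≤ b) : xseq b ≤ xseq a :=
  xseq_strictAnti.antitone h

lemma xseq_tendsto : Tendsto xseq atTop (nhds 0) := by
  apply Tendsto.div_atTop tendsto_const_nhds
  apply Real.tendsto_log_atTop.comp
  apply tendsto_atTop_add_const_right
  exact tendsto_natCast_atTop_atTop

lemma F_zero : F 0 = 0 := by simp [F]

lemma F_of_pos {r : ℝ} (hr : 0 < r) :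
    F r = Real.log 2 / Real.log (Real.exp (Real.log 2 / r) + 1) := by
  simp [F, not_le.mpr hr]

lemma log_exp_add_one_pos (u : ℝ) : 0 < Real.log (Real.exp u + 1) := by
  apply Real.log_pos; linarith [Real.exp_pos u]

lemma lt_log_exp_add_one {u : ℝ} (hu : 0 < u) : u < Real.log (Real.exp u + 1) := by
  have := Real.exp_pos u
  calc u = Real.log (Real.exp u) := (Real.log_exp u).symm
    _ < _ := Real.log_lt_log this (by linarith)

lemma F_pos {r : ℝ} (hr : 0 < r) : 0 < F r := by
  rw [F_of_pos hr]; exact div_pos l2pos (log_exp_add_one_pos _)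

lemma F_lt_self {r : ℝ} (hr : 0 < r) : F r < r := by
  rw [F_of_pos hr]
  have h1 : 0 < Real.log 2 / r := div_pos l2pos hr
  have h2 := lt_log_exp_add_one h1
  calc Real.log 2 / Real.log (Real.exp (Real.log 2 / r) + 1)
      < Real.log 2 / (Real.log 2 / r) := by
        apply div_lt_div_of_pos_left l2pos h1 h2
    _ = r := by field_simp

lemma F_mem {r : ℝ} (hr : r ∈ Set.Icc (0:ℝ) 1) : F r ∈ Set.Icc (0:ℝ) 1 := by
  rcases eq_or_lt_of_le hr.1 with h | h
  · rw [← h, F_zero]; exact ⟨le_rfl, zero_le_one⟩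
  · exact ⟨(F_pos h).le, (F_lt_self h).le.trans hr.2⟩

lemma F_xseq (m : ℕ) : F (xseq m) = xseq (m + 1) := by
  rw [F_of_pos (xseq_pos m)]
  have h1 : Real.log 2 / xseq m = Real.log (m + 2) := by
    rw [xseq]; field_simp
  rw [h1, Real.exp_log (by positivity)]
  rw [xseq]
  norm_num
  ring_nf

/-- main strict contraction estimate -/
lemma F_strict {a b : ℝ} (ha : 0 < a) (hab : a < b) :
    F a < F b ∧ F b - F a < b - a := by
  have hb : 0 < b := ha.trans hab
  set u := Real.log 2 / b with hu
  set v := Real.log 2 / a with hv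
  have hu0 : 0 < u := div_pos l2pos hb
  have huv : u < v := by
    rw [hu, hv]; exact div_lt_div_of_pos_left l2pos ha hab
  have hv0 : 0 < v := hu0.trans huv
  set A := Real.log (Real.exp u + 1) with hA
  set B := Real.log (Real.exp v + 1) with hB
  have hA0 : 0 < A := log_exp_add_one_pos u
  have hB0 : 0 < B := log_exp_add_one_pos v
  have hAB : A < B := by
    apply Real.log_lt_log (by positivity)
    have := Real.exp_lt_exp.mpr huv; linarith
  have huA : u < A := lt_log_exp_add_one hu0
  have hvB : v < B := lt_log_exp_add_one hv0
  have hBA : B - A < v - u := by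
    have h1 : Real.exp v + 1 < Real.exp (v - u) * (Real.exp u + 1) := by
      rw [mul_add, mul_one, ← Real.exp_add, sub_add_cancel]
      have h2 : (1:ℝ) < Real.exp (v - u) := by
        rw [Real.one_lt_exp_iff]; linarith
      linarith
    have h3 : B < (v - u) + A := by
      rw [hB, hA]
      calc Real.log (Real.exp v + 1) < Real.log (Real.exp (v - u) * (Real.exp u + 1)) :=
            Real.log_lt_log (by positivity) h1
        _ = (v - u) + Real.log (Real.exp u + 1) := by
            rw [Real.log_mul (by positivity) (by positivity), Real.log_exp]
    linarith
  have key : Real.log 2 * (B - A) / (A * B) < Real.log 2 * (v - u) / (u * v) := by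
    have huvAB : u * v < A * B := by
      calc u * v < A * v := by exact mul_lt_mul_of_pos_right huA hv0
        _ < A * B := by exact mul_lt_mul_of_pos_left hvB hA0
    calc Real.log 2 * (B - A) / (A * B) < Real.log 2 * (B - A) / (u * v) :=
          div_lt_div_of_pos_left (by nlinarith [l2pos]) (by positivity) huvAB
      _ < Real.log 2 * (v - u) / (u * v) := by
          apply div_lt_div_of_pos_right ?_ (by positivity)
          nlinarith [l2pos]
  have e1 : F b - F a = Real.log 2 * (B - A) / (A * B) := by
    rw [F_of_pos ha, F_of_pos hb, ← hv, ← hu, ← hA, ← hB]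
    field_simp
  have e2 : b - a = Real.log 2 * (v - u) / (u * v) := by
    rw [hu, hv]; field_simp
  constructor
  · rw [F_of_pos ha, F_of_pos hb, ← hv, ← hu, ← hA, ← hB]
    exact div_lt_div_of_pos_left l2pos hA0 hAB
  · rw [e1, e2]; exact key

/-- weak contraction property of F on nonneg reals -/
lemma F_weak {a b : ℝ} (ha : 0 ≤ a) (hab : a < b) : |F b - F a| < b - a := by
  rcases eq_or_lt_of_le ha with h | h
  · have hb : 0 < b := h ▸ hab
    rw [← h, F_zero, sub_zero, abs_of_pos (F_pos hb)]
    have := F_lt_self hb; linarith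
  · obtain ⟨h1, h2⟩ := F_strict h hab
    rw [abs_of_pos (by linarith)]; exact h2



def clamp (r : ℝ) : ℝ := max 0 (min 1 r)

lemma clamp_mem (r : ℝ) : clamp r ∈ Set.Icc (0:ℝ) 1 := by
  constructor
  · exact le_max_left _ _
  · apply max_le zero_le_one (min_le_left _ _)

lemma clamp_eq {r : ℝ} (h : r ∈ Set.Icc (0:ℝ) 1) : clamp r = r := by
  rw [clamp, min_eq_right h.2, max_eq_right h.1]

def ep (d : ℕ) (hd : 0 < d) (r : ℝ) : unitCube d :=
  ⟨(WithLp.toLp 2 (fun i => if i = (⟨0, hd⟩ : Fin d) then clamp r else 0) : EuclideanSpace ℝ (Fin d)),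
    fun i => by
      dsimp only
      split_ifs
      · exact clamp_mem r
      · exact ⟨le_refl 0, zero_le_one⟩⟩

lemma ep_coord (d : ℕ) (hd : 0 < d) (r : ℝ) :
    (ep d hd r).1 ⟨0, hd⟩ = clamp r := by
  simp [ep]

lemma ep_coord' (d : ℕ) (hd : 0 < d) {r : ℝ} (h : r ∈ Set.Icc (0:ℝ) 1) :
    (ep d hd r).1 ⟨0, hd⟩ = r := by
  rw [ep_coord, clamp_eq h]

lemma dist_ep (d : ℕ) (hd : 0 < d) {r s : ℝ} (hr : r ∈ Set.Icc (0:ℝ) 1)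
    (hs : s ∈ Set.Icc (0:ℝ) 1) : dist (ep d hd r) (ep d hd s) = |r - s| := by
  rw [Subtype.dist_eq, EuclideanSpace.dist_eq]
  have h1 : ∀ i : Fin d,
      dist ((ep d hd r).1 i) ((ep d hd s).1 i) ^ 2 =
        if i = (⟨0, hd⟩ : Fin d) then dist r s ^ 2 else 0 := by
    intro i
    by_cases h : i = (⟨0, hd⟩ : Fin d) <;> simp [ep, h, clamp_eq hr, clamp_eq hs]
  rw [Finset.sum_congr rfl (fun i _ => h1 i), Finset.sum_ite_eq' Finset.univ _ _]
  simp only [Finset.mem_univ, if_true]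
  rw [Real.dist_eq, ← Real.sqrt_sq_eq_abs]
  exact Real.sqrt_sq (Real.sqrt_nonneg _)

lemma coord_le_dist (d : ℕ) (hd : 0 < d) (x y : unitCube d) :
    |x.1 ⟨0, hd⟩ - y.1 ⟨0, hd⟩| ≤ dist x y := by
  rw [Subtype.dist_eq, EuclideanSpace.dist_eq]
  have h1 : dist (x.1 ⟨0, hd⟩) (y.1 ⟨0, hd⟩) ^ 2 ≤
      ∑ i, dist (x.1 i) (y.1 i) ^ 2 :=
    Finset.single_le_sum (f := fun i => dist (x.1 i) (y.1 i) ^ 2)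
      (fun i _ => sq_nonneg _) (Finset.mem_univ _)
  calc |x.1 ⟨0, hd⟩ - y.1 ⟨0, hd⟩| = Real.sqrt (dist (x.1 ⟨0, hd⟩) (y.1 ⟨0, hd⟩) ^ 2) := by
        rw [Real.dist_eq, Real.sqrt_sq_eq_abs, abs_abs]
    _ ≤ _ := Real.sqrt_le_sqrt h1

def Xr : Set ℝ := insert 0 (Set.range xseq)

lemma zero_mem_Xr : (0:ℝ) ∈ Xr := Set.mem_insert _ _

lemma xseq_mem_Xr (m : ℕ) : xseq m ∈ Xr := Set.mem_insert_of_mem _ ⟨m, rfl⟩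

lemma Xr_subset : Xr ⊆ Set.Icc (0:ℝ) 1 := by
  rintro r (rfl | ⟨m, rfl⟩)
  · exact ⟨le_rfl, zero_le_one⟩
  · exact xseq_mem m

lemma Xr_compact : IsCompact Xr := xseq_tendsto.isCompact_insert_range

lemma F_Xr {r : ℝ} (hr : r ∈ Xr) : F r ∈ Xr := by
  rcases hr with rfl | ⟨m, rfl⟩
  · rw [F_zero]; exact zero_mem_Xr
  · rw [F_xseq]; exact xseq_mem_Xr _

def Xset (d : ℕ) (hd : 0 < d) : Set (unitCube d) := ep d hd '' Xr

lemma ep_lipschitzOn (d : ℕ) (hd : 0 < d) :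
    LipschitzOnWith 1 (ep d hd) (Set.Icc (0:ℝ) 1) := by
  apply LipschitzOnWith.of_dist_le_mul
  intro r hr s hs
  rw [dist_ep d hd hr hs, Real.dist_eq, NNReal.coe_one, one_mul]

lemma Xset_compact (d : ℕ) (hd : 0 < d) : IsCompact (Xset d hd) :=
  Xr_compact.image_of_continuousOn
    (((ep_lipschitzOn d hd).continuousOn).mono Xr_subset)

lemma Xset_nonempty (d : ℕ) (hd : 0 < d) : (Xset d hd).Nonempty :=
  ⟨ep d hd 0, ⟨0, zero_mem_Xr, rfl⟩⟩

def wf1 (d : ℕ) (hd : 0 < d) : unitCube d → unitCube d :=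
  fun ξ => ep d hd (F (ξ.1 ⟨0, hd⟩))

def wf2 (d : ℕ) (hd : 0 < d) : unitCube d → unitCube d :=
  fun _ => ep d hd 1

lemma wf1_ep (d : ℕ) (hd : 0 < d) {r : ℝ} (hr : r ∈ Set.Icc (0:ℝ) 1) :
    wf1 d hd (ep d hd r) = ep d hd (F r) := by
  rw [wf1, ep_coord' d hd hr]

lemma wf1_weak (d : ℕ) (hd : 0 < d) : IsWeakContraction (wf1 d hd) := by
  intro x y hxy
  have hx := x.2 ⟨0, hd⟩
  have hy := y.2 ⟨0, hd⟩
  have hda : dist (wf1 d hd x) (wf1 d hd y) =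
      |F (x.1 ⟨0, hd⟩) - F (y.1 ⟨0, hd⟩)| := dist_ep d hd (F_mem hx) (F_mem hy)
  rcases eq_or_ne (x.1 ⟨0, hd⟩) (y.1 ⟨0, hd⟩) with h | h
  · rw [hda, h, sub_self, abs_zero]
    exact dist_pos.mpr hxy
  · have h2 : |F (x.1 ⟨0, hd⟩) - F (y.1 ⟨0, hd⟩)| < |x.1 ⟨0, hd⟩ - y.1 ⟨0, hd⟩| := by
      rcases h.lt_or_gt with hlt | hlt
      · rw [abs_sub_comm, abs_sub_comm (x.1 ⟨0, hd⟩)]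
        rw [abs_of_pos (sub_pos.mpr hlt)]
        exact F_weak hx.1 hlt
      · rw [abs_of_pos (sub_pos.mpr hlt)]
        exact F_weak hy.1 hlt
    rw [hda]
    exact h2.trans_le (coord_le_dist d hd x y)

lemma wf2_weak (d : ℕ) (hd : 0 < d) : IsWeakContraction (wf2 d hd) := by
  intro x y hxy
  simp only [wf2, dist_self]
  exact dist_pos.mpr hxy

def ff (d : ℕ) (hd : 0 < d) : Fin 2 → unitCube d → unitCube d :=
  fun i => if i = 0 then wf1 d hd else wf2 d hd

lemma attractor_eq (d : ℕ) (hd : 0 < d) :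
    Xset d hd = ⋃ i : Fin 2, ff d hd i '' Xset d hd := by
  ext z
  constructor
  · rintro ⟨r, hr, rfl⟩
    rcases hr with rfl | ⟨m, rfl⟩
    · refine Set.mem_iUnion.mpr ⟨0, ⟨ep d hd 0, ⟨0, zero_mem_Xr, rfl⟩, ?_⟩⟩
      show wf1 d hd (ep d hd 0) = ep d hd 0
      rw [wf1_ep d hd ⟨le_rfl, zero_le_one⟩, F_zero]
    · rcases m with _ | p
      · refine Set.mem_iUnion.mpr ⟨1, ⟨ep d hd 0, ⟨0, zero_mem_Xr, rfl⟩, ?_⟩⟩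
        show ep d hd 1 = ep d hd (xseq 0)
        rw [xseq_zero]
      · refine Set.mem_iUnion.mpr ⟨0, ⟨ep d hd (xseq p), ⟨xseq p, xseq_mem_Xr p, rfl⟩, ?_⟩⟩
        show wf1 d hd (ep d hd (xseq p)) = ep d hd (xseq (p+1))
        rw [wf1_ep d hd (xseq_mem p), F_xseq]
  · intro hz
    obtain ⟨i, w, hw, rfl⟩ := Set.mem_iUnion.mp hz
    obtain ⟨r, hr, rfl⟩ := hw
    rcases eq_or_ne i 0 with rfl | hi
    · show wf1 d hd (ep d hd r) ∈ Xset d hd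
      rw [wf1_ep d hd (Xr_subset hr)]
      exact ⟨F r, F_Xr hr, rfl⟩
    · show (if i = 0 then wf1 d hd else wf2 d hd) (ep d hd r) ∈ Xset d hd
      rw [if_neg hi]
      show ep d hd 1 ∈ Xset d hd
      rw [← xseq_zero]
      exact ⟨xseq 0, xseq_mem_Xr 0, rfl⟩

def Xnc (d : ℕ) (hd : 0 < d) : NonemptyCompacts (unitCube d) :=
  ⟨⟨Xset d hd, Xset_compact d hd⟩, Xset_nonempty d hd⟩

lemma Xnc_coe (d : ℕ) (hd : 0 < d) : (Xnc d hd : Set (unitCube d)) = Xset d hd := rfl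

lemma Xnc_mem_wLd (d : ℕ) (hd : 0 < d) : Xnc d hd ∈ wLd 2 d := by
  refine ⟨ff d hd, ?_, ?_⟩
  · intro i
    rcases eq_or_ne i 0 with rfl | hi
    · simpa [ff] using wf1_weak d hd
    · simpa [ff, hi] using wf2_weak d hd
  · rw [Xnc_coe]
    exact attractor_eq d hd

set_option maxHeartbeats 1000000 in
lemma Xnc_not_IFS (d : ℕ) (hd : 0 < d) : Xnc d hd ∉ IFSd d := by
  rw [IFSd, Set.mem_iUnion]
  rintro ⟨n, f, hcon, heq⟩
  rw [Xnc_coe] at heq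
  -- get an inhabitant of Fin n
  obtain ⟨z0, hz0⟩ := Xset_nonempty d hd
  obtain ⟨i00, -⟩ := Set.mem_iUnion.mp (heq ▸ hz0)
  -- common Lipschitz constant
  choose Lf hL1 hL2 using hcon
  set L : NNReal := Finset.univ.sup Lf with hLdef
  have hLlt : L < 1 := by
    rw [hLdef]
    exact (Finset.sup_lt_iff (by norm_num)).mpr (fun i _ => hL1 i)
  have hLip : ∀ i, LipschitzWith L (f i) :=
    fun i => (hL2 i).weaken (Finset.le_sup (Finset.mem_univ i))
  set ℓ : ℝ := max (L : ℝ) (1/2) with hldef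
  have hl1 : ℓ < 1 := max_lt (by exact_mod_cast hLlt) (by norm_num)
  have hl2 : (1/2 : ℝ) ≤ ℓ := le_max_right _ _
  have hl0 : (0:ℝ) < ℓ := by linarith
  -- projected maps
  set φ : Fin n → ℝ → ℝ := fun i r => (f i (ep d hd r)).1 ⟨0, hd⟩ with hφdef
  have hφmem : ∀ i r, φ i r ∈ Set.Icc (0:ℝ) 1 := fun i r => (f i (ep d hd r)).2 _
  have hφlip : ∀ i, ∀ r ∈ Set.Icc (0:ℝ) 1, ∀ s ∈ Set.Icc (0:ℝ) 1,
      |φ i r - φ i s| ≤ ℓ * |r - s| := by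
    intro i r hr s hs
    calc |φ i r - φ i s| ≤ dist (f i (ep d hd r)) (f i (ep d hd s)) :=
          coord_le_dist d hd _ _
      _ ≤ (L:ℝ) * dist (ep d hd r) (ep d hd s) := (hLip i).dist_le_mul _ _
      _ = (L:ℝ) * |r - s| := by rw [dist_ep d hd hr hs]
      _ ≤ ℓ * |r - s| := by
          apply mul_le_mul_of_nonneg_right (le_max_left _ _) (abs_nonneg _)
  -- covering property
  have cover : ∀ a ∈ Xr, ∃ i, ∃ s ∈ Xr, φ i s = a := by
    intro a ha
    have h1 : ep d hd a ∈ Xset d hd := ⟨a, ha, rfl⟩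
    rw [heq] at h1
    obtain ⟨i, w, hw, hfw⟩ := Set.mem_iUnion.mp h1
    obtain ⟨s, hs, rfl⟩ := hw
    refine ⟨i, s, hs, ?_⟩
    rw [hφdef]
    show (f i (ep d hd s)).1 ⟨0, hd⟩ = a
    rw [hfw, ep_coord' d hd (Xr_subset ha)]
  set c : Fin n → ℝ := fun i => φ i 0 with hcdef
  have hcmem : ∀ i, c i ∈ Set.Icc (0:ℝ) 1 := fun i => hφmem i 0
  set ε0 : ℝ := Finset.univ.inf' (Finset.univ_nonempty_iff.mpr ⟨i00⟩)
      (fun i => if c i = 0 then 1 else c i) with hε0def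
  have hε0pos : 0 < ε0 := by
    rw [hε0def, Finset.lt_inf'_iff]
    intro i _
    by_cases h : c i = 0
    · simp [h]
    · rw [if_neg h]
      exact lt_of_le_of_ne (hcmem i).1 (Ne.symm h)
  have hε0le : ∀ i, c i ≠ 0 → ε0 ≤ c i := by
    intro i h
    have := Finset.inf'_le (s := (Finset.univ : Finset (Fin n)))
      (fun i => if c i = 0 then 1 else c i) (Finset.mem_univ i)
    rwa [if_neg h] at this
  set E : ℝ := Real.exp (2 * Real.log 2 / ε0) with hEdef
  have hEpos : 0 < E := Real.exp_pos _
  set B' : ℕ := Nat.ceil E with hB'def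
  set m0 : ℕ := B' + 1 with hm0def
  have hm0 : ∀ m : ℕ, m0 ≤ m → xseq m < ε0 / 2 := by
    intro m hm
    have h1 : E < (m:ℝ) + 2 := by
      have : (B':ℝ) ≤ m := by exact_mod_cast (by omega : B' ≤ m)
      have := Nat.le_ceil E
      linarith
    have h2 : 2 * Real.log 2 / ε0 < Real.log (m + 2) := by
      calc 2 * Real.log 2 / ε0 = Real.log E := (Real.log_exp _).symm
        _ < Real.log (m + 2) := Real.log_lt_log hEpos h1
    have h3 : 0 < 2 * Real.log 2 / ε0 := by positivity
    calc xseq m < Real.log 2 / (2 * Real.log 2 / ε0) :=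
          div_lt_div_of_pos_left l2pos h3 h2
      _ = ε0 / 2 := by field_simp
  have hB' : ∀ p : ℕ, ε0 / 2 < xseq p → p ≤ B' := by
    intro p hp
    have hLP := logm2_pos p
    rw [xseq, lt_div_iff₀ hLP] at hp
    have h1 : Real.log ((p:ℝ) + 2) < 2 * Real.log 2 / ε0 := by
      rw [lt_div_iff₀ hε0pos]; nlinarith
    have h2 : (p:ℝ) + 2 < E := by
      calc (p:ℝ) + 2 = Real.exp (Real.log ((p:ℝ) + 2)) := (Real.exp_log (by positivity)).symm
        _ < E := by rw [hEdef]; exact Real.exp_lt_exp.mpr h1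
    have h3 : (p:ℝ) < (B':ℝ) := by
      have := Nat.le_ceil E
      linarith
    exact_mod_cast h3.le
  -- choose M large
  have heps : (0:ℝ) < 1 - ℓ := by linarith
  have hev := (tendsto_rpow_neg_atTop heps).eventually_lt_const
      (show (0:ℝ) < 1 / (2 * ((n:ℝ) + 1)) by positivity)
  rw [Filter.eventually_atTop] at hev
  obtain ⟨R, hR⟩ := hev
  obtain ⟨M, hM⟩ := exists_nat_ge (max R (2 * ((m0:ℝ) + n * ((B':ℝ) + 1) + 3)))
  have hMR : R ≤ (M:ℝ) := le_trans (le_max_left _ _) hM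
  have hMsize : 2 * ((m0:ℝ) + n * ((B':ℝ) + 1) + 3) ≤ M := le_trans (le_max_right _ _) hM
  have hm0M : m0 ≤ M := by
    have h1 : (m0:ℝ) ≤ (M:ℝ) := by
      have h2 : (0:ℝ) ≤ (n:ℝ) * ((B':ℝ) + 1) := by positivity
      have h3 : (0:ℝ) ≤ (m0:ℝ) := Nat.cast_nonneg _
      linarith
    exact_mod_cast h1
  set Qf : ℕ := Nat.floor (((M:ℝ) + 2) ^ ℓ) with hQfdef
  set Q : ℕ := max B' Qf with hQdef
  have key : ∀ m : ℕ, m0 ≤ m → m ≤ M → ∃ i p, p ≤ Q ∧ φ i (xseq p) = xseq m := by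
    intro m h1 h2
    obtain ⟨i, s, hs, hφs⟩ := cover (xseq m) (xseq_mem_Xr m)
    have hsIcc := Xr_subset hs
    have hlipb := hφlip i s hsIcc 0 ⟨le_rfl, zero_le_one⟩
    rw [sub_zero, abs_of_nonneg hsIcc.1] at hlipb
    have hφ0 : φ i 0 = c i := rfl
    rw [hφ0, hφs] at hlipb
    -- hlipb : |xseq m - c i| ≤ ℓ * s
    by_cases hci : c i = 0
    · have hb : xseq m ≤ ℓ * s := by
        rw [hci, sub_zero, abs_of_nonneg (xseq_pos m).le] at hlipb
        exact hlipb
      have hs0 : s ≠ 0 := by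
        intro h; rw [h, mul_zero] at hb; exact absurd hb (not_le.mpr (xseq_pos m))
      obtain (rfl | ⟨p, rfl⟩) := hs
      · exact absurd rfl hs0
      · have hMm : xseq M ≤ ℓ * xseq p := le_trans (xseq_anti h2) hb
        have hLM := logm2_pos M
        have hLP := logm2_pos p
        have hlog : Real.log ((p:ℝ) + 2) ≤ ℓ * Real.log ((M:ℝ) + 2) := by
          rw [xseq, xseq, mul_div_assoc'] at hMm
          rw [div_le_div_iff₀ hLM hLP] at hMm
          have h4 : Real.log 2 * Real.log ((p:ℝ)+2) ≤
              Real.log 2 * (ℓ * Real.log ((M:ℝ)+2)) := by nlinarith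
          exact le_of_mul_le_mul_left h4 l2pos
        have hp2 : (p:ℝ) + 2 ≤ ((M:ℝ) + 2) ^ ℓ := by
          have he : (p:ℝ) + 2 = Real.exp (Real.log ((p:ℝ)+2)) :=
            (Real.exp_log (by positivity)).symm
          rw [he, Real.rpow_def_of_pos (by positivity)]
          exact Real.exp_le_exp.mpr (by rw [mul_comm]; exact hlog)
        have hpQf : p ≤ Qf := Nat.le_floor (by push_cast; linarith)
        exact ⟨i, p, le_trans hpQf (le_max_right _ _), hφs⟩
    · have hciε : ε0 ≤ c i := hε0le i hci
      have hxm : xseq m < ε0 / 2 := hm0 m h1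
      have habs : ε0 / 2 < |xseq m - c i| := by
        rw [abs_sub_comm, abs_of_pos (by linarith [xseq_pos m] : 0 < c i - xseq m)]
        linarith
      have hsbig : ε0 / 2 < s := by
        have h5 : ℓ * s ≤ s := by nlinarith [hsIcc.1]
        linarith
      have hs0 : s ≠ 0 := by intro h; rw [h] at hsbig; linarith
      obtain (rfl | ⟨p, rfl⟩) := hs
      · exact absurd rfl hs0
      · exact ⟨i, p, le_trans (hB' p hsbig) (le_max_left _ _), hφs⟩
  have key' : ∀ m : ℕ, ∃ ip : Fin n × ℕ,
      m0 ≤ m → m ≤ M → ip.2 ≤ Q ∧ φ ip.1 (xseq ip.2) = xseq m := by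
    intro m
    by_cases h1 : m0 ≤ m
    · by_cases h2 : m ≤ M
      · obtain ⟨i, p, hp, hφp⟩ := key m h1 h2
        exact ⟨(i, p), fun _ _ => ⟨hp, hφp⟩⟩
      · exact ⟨(i00, 0), fun _ h => absurd h h2⟩
    · exact ⟨(i00, 0), fun h _ => absurd h h1⟩
  choose IP hIP using key'
  have hcard : (Finset.Icc m0 M).card ≤
      ((Finset.univ : Finset (Fin n)) ×ˢ Finset.range (Q + 1)).card := by
    apply Finset.card_le_card_of_injOn IP
    · intro m hm
      rw [Finset.coe_Icc, Set.mem_Icc] at hm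
      obtain ⟨h1, -⟩ := hIP m hm.1 hm.2
      exact Finset.mem_product.mpr ⟨Finset.mem_univ _, Finset.mem_range.mpr (Nat.lt_succ_of_le h1)⟩
    · intro m1 hm1 m2 hm2 hEq
      rw [Finset.coe_Icc, Set.mem_Icc] at hm1 hm2
      obtain ⟨-, e1⟩ := hIP m1 hm1.1 hm1.2
      obtain ⟨-, e2⟩ := hIP m2 hm2.1 hm2.2
      have e3 : xseq m1 = xseq m2 := by rw [← e1, ← e2, hEq]
      exact xseq_strictAnti.injective e3
  rw [Nat.card_Icc, Finset.card_product, Finset.card_univ, Fintype.card_fin,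
    Finset.card_range] at hcard
  have hcardR : (M:ℝ) + 1 - m0 ≤ (n:ℝ) * ((Q:ℝ) + 1) := by
    have h1 : ((M + 1 - m0 : ℕ) : ℝ) ≤ ((n * (Q + 1) : ℕ) : ℝ) := by exact_mod_cast hcard
    rw [Nat.cast_sub (by omega)] at h1
    push_cast at h1 ⊢
    linarith
  have hQle : (Q:ℝ) ≤ (B':ℝ) + ((M:ℝ) + 2) ^ ℓ := by
    have h1 : Q ≤ B' + Qf := by omega
    have h2 : (Qf:ℝ) ≤ ((M:ℝ) + 2) ^ ℓ := Nat.floor_le (Real.rpow_nonneg (by positivity) _)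
    have h3 : (Q:ℝ) ≤ (B':ℝ) + (Qf:ℝ) := by exact_mod_cast h1
    linarith
  have hMpos : (0:ℝ) < (M:ℝ) + 2 := by positivity
  have hrpow : ((M:ℝ) + 2) ^ ℓ < ((M:ℝ) + 2) / (2 * ((n:ℝ) + 1)) := by
    have h1 := hR ((M:ℝ) + 2) (by linarith)
    have h2 : ((M:ℝ) + 2) ^ (-(1 - ℓ)) = ((M:ℝ) + 2) ^ ℓ / ((M:ℝ) + 2) := by
      rw [show -(1 - ℓ) = ℓ - 1 by ring, Real.rpow_sub hMpos, Real.rpow_one]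
    rw [h2, div_lt_iff₀ hMpos] at h1
    calc ((M:ℝ) + 2) ^ ℓ < 1 / (2 * ((n:ℝ) + 1)) * ((M:ℝ) + 2) := h1
      _ = ((M:ℝ) + 2) / (2 * ((n:ℝ) + 1)) := by ring
  set S : ℝ := (n:ℝ) * ((B':ℝ) + 1) with hSdef
  have hS0 : 0 ≤ S := by positivity
  have hfin1 : (M:ℝ) + 1 - m0 ≤ S + (n:ℝ) * (((M:ℝ) + 2) ^ ℓ) := by
    have h1 : (n:ℝ) * ((Q:ℝ) + 1) ≤ (n:ℝ) * ((B':ℝ) + ((M:ℝ) + 2) ^ ℓ + 1) :=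
      mul_le_mul_of_nonneg_left (by linarith) (Nat.cast_nonneg _)
    have h2 : (n:ℝ) * ((B':ℝ) + ((M:ℝ) + 2) ^ ℓ + 1) = S + (n:ℝ) * (((M:ℝ) + 2) ^ ℓ) := by
      rw [hSdef]; ring
    linarith
  have hfin2 : (n:ℝ) * (((M:ℝ) + 2) ^ ℓ) ≤ ((M:ℝ) + 2) / 2 := by
    have h1 : (n:ℝ) * (((M:ℝ) + 2) ^ ℓ) ≤ (n:ℝ) * (((M:ℝ) + 2) / (2 * ((n:ℝ) + 1))) :=
      mul_le_mul_of_nonneg_left hrpow.le (Nat.cast_nonneg _)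
    have h2 : (n:ℝ) * (((M:ℝ) + 2) / (2 * ((n:ℝ) + 1))) ≤ ((M:ℝ) + 2) / 2 := by
      have e4 : (n:ℝ) * (((M:ℝ) + 2) / (2 * ((n:ℝ) + 1))) =
          ((M:ℝ) + 2) * ((n:ℝ) / (2 * ((n:ℝ) + 1))) := by ring
      have h5 : (n:ℝ) / (2 * ((n:ℝ) + 1)) ≤ 1 / 2 := by
        rw [div_le_div_iff₀ (by positivity) (by norm_num : (0:ℝ) < 2)]
        have := Nat.cast_nonneg (α := ℝ) n
        linarith
      calc (n:ℝ) * (((M:ℝ) + 2) / (2 * ((n:ℝ) + 1)))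
          = ((M:ℝ) + 2) * ((n:ℝ) / (2 * ((n:ℝ) + 1))) := e4
        _ ≤ ((M:ℝ) + 2) * (1 / 2) := mul_le_mul_of_nonneg_left h5 (by positivity)
        _ = ((M:ℝ) + 2) / 2 := by ring
    linarith
  have hm0R : (0:ℝ) ≤ (m0:ℝ) := Nat.cast_nonneg _
  linarith

end S15

theorem stmt15 (d : ℕ) (hd : 0 < d) :
    ∃ X : NonemptyCompacts (unitCube d), X ∈ wLd 2 d ∧ X ∉ IFSd d :=
  ⟨S15.Xnc d hd, S15.Xnc_mem_wLd d hd, S15.Xnc_not_IFS d hd⟩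
end
end

section
/- Let X = {0} ∪ {x_n : n ∈ ℕ} ⊆ [0,1] where (x_n) is strictly decreasing to 0 with x_n - x_{n+1} strictly decreasing. Then there is a weak contraction g : [0,1] → [0,1] with g(x_n) = x_{n+1} for all n and g(0) = 0, and hence X is an attractor of a system of two weak contractions (g together with the constant map with value x_1). -/
open Metric Set Topology Filter TopologicalSpace

noncomputable section

namespace Stmt16Aux

variable {x : ℕ → ℝ}

open Classical in
noncomputable def Nt (x : ℕ → ℝ) (t : ℝ) : ℕ :=
  if h : ∃ n, x n ≤ t then Nat.find h else 0

noncomputable def gf (x : ℕ → ℝ) (t : ℝ) : ℝ :=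
  if t ≤ 0 then 0
  else if x 0 ≤ t then x 1
  else x (Nt x t + 1) +
    (x (Nt x t) - x (Nt x t + 1)) / (x (Nt x t - 1) - x (Nt x t)) * (t - x (Nt x t))

lemma xpos (hanti : StrictAnti x) (hlim : Tendsto x atTop (𝓝 0)) (n : ℕ) : 0 < x n := by
  have h1 : (0:ℝ) ≤ x (n+1) :=
    le_of_tendsto hlim (eventually_atTop.2 ⟨n+1, fun k hk => hanti.antitone hk⟩)
  exact lt_of_le_of_lt h1 (hanti (Nat.lt_succ_self n))

lemma Nt_eq (hanti : StrictAnti x) {t : ℝ} {m : ℕ} (h1 : x (m+1) ≤ t) (h2 : t < x m) :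
    Nt x t = m + 1 := by
  have hex : ∃ n, x n ≤ t := ⟨m+1, h1⟩
  rw [Nt]
  rw [dif_pos hex]
  have hle : Nat.find hex ≤ m+1 := Nat.find_le h1
  have hgt : m < Nat.find hex := by
    by_contra hc
    push_neg at hc
    exact absurd (le_trans (hanti.antitone hc) (Nat.find_spec hex)) (not_le.2 h2)
  omega

lemma gf_eq (hanti : StrictAnti x) (hlim : Tendsto x atTop (𝓝 0)) {t : ℝ} {m : ℕ}
    (h1 : x (m+1) ≤ t) (h2 : t < x m) :
    gf x t = x (m+2) + (x (m+1) - x (m+2)) / (x m - x (m+1)) * (t - x (m+1)) := by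
  have ht0 : 0 < t := lt_of_lt_of_le (xpos hanti hlim (m+1)) h1
  have ht1 : t < x 0 := lt_of_lt_of_le h2 (hanti.antitone (Nat.zero_le m))
  rw [gf, if_neg (not_le.2 ht0), if_neg (not_le.2 ht1), Nt_eq hanti h1 h2]
  norm_num

lemma gf_bounds (hanti : StrictAnti x) (hlim : Tendsto x atTop (𝓝 0))
    (hgaps : ∀ n, x n - x (n + 1) > x (n + 1) - x (n + 2)) {t : ℝ} {m : ℕ}
    (h1 : x (m+1) ≤ t) (h2 : t < x m) :
    (x (m+2) ≤ gf x t ∧ gf x t < x (m+1)) ∧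
    (x (m+1) - x (m+2) ≤ t - gf x t ∧ t - gf x t < x m - x (m+1)) := by
  have hD : 0 < x m - x (m+1) := sub_pos.2 (hanti (Nat.lt_succ_self m))
  have hE : 0 < x (m+1) - x (m+2) := sub_pos.2 (hanti (Nat.lt_succ_self (m+1)))
  have hED : x (m+1) - x (m+2) < x m - x (m+1) := hgaps m
  rw [gf_eq hanti hlim h1 h2]
  set D := x m - x (m+1) with hDdef
  set E := x (m+1) - x (m+2) with hEdef
  have hs : E / D * D = E := div_mul_cancel₀ _ hD.ne'
  have hs0 : 0 < E / D := div_pos hE hD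
  have hs1 : E / D < 1 := (div_lt_one hD).2 hED
  have hu0 : 0 ≤ t - x (m+1) := by linarith
  have huD : t - x (m+1) < D := by rw [hDdef]; linarith
  refine ⟨⟨?_, ?_⟩, ?_, ?_⟩
  · nlinarith [mul_nonneg hs0.le hu0]
  · nlinarith [mul_lt_mul_of_pos_left huD hs0]
  · nlinarith [mul_nonneg hu0 (by linarith : (0:ℝ) ≤ 1 - E/D)]
  · nlinarith [mul_lt_mul_of_pos_left huD (by linarith : (0:ℝ) < 1 - E/D)]

lemma exists_piece (hanti : StrictAnti x) (hlim : Tendsto x atTop (𝓝 0)) {t : ℝ}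
    (ht0 : 0 < t) (ht1 : t < x 0) : ∃ m, x (m+1) ≤ t ∧ t < x m := by
  have hex : ∃ n, x n ≤ t := by
    obtain ⟨n, hn⟩ := (hlim.eventually (gt_mem_nhds ht0)).exists
    exact ⟨n, hn.le⟩
  have hn0 : Nat.find hex ≠ 0 := by
    intro h
    exact absurd (h ▸ Nat.find_spec hex) (not_le.2 ht1)
  refine ⟨Nat.find hex - 1, ?_, ?_⟩
  · have h : Nat.find hex - 1 + 1 = Nat.find hex := by omega
    rw [h]; exact Nat.find_spec hex
  · exact not_le.1 (Nat.find_min hex (by omega))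

lemma key (hanti : StrictAnti x) (hlim : Tendsto x atTop (𝓝 0))
    (hgaps : ∀ n, x n - x (n + 1) > x (n + 1) - x (n + 2))
    {a b : ℝ} (ha : 0 ≤ a) (hab : a < b) :
    gf x a ≤ gf x b ∧ a - gf x a < b - gf x b := by
  have hpos := xpos hanti hlim
  have hx01 : x 1 < x 0 := hanti Nat.zero_lt_one
  have hxa := hanti.antitone
  have danti : ∀ {i j : ℕ}, i ≤ j → x j - x (j+1) ≤ x i - x (i+1) := fun h =>
    (strictAnti_nat_of_succ_lt (f := fun n => x n - x (n+1)) (fun n => hgaps n)).antitone h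
  rcases le_or_gt (x 0) b with hbtop | hblt
  · have hgb : gf x b = x 1 := by
      rw [gf, if_neg (not_le.2 (lt_of_lt_of_le (hpos 0) hbtop)), if_pos hbtop]
    rcases le_or_gt a 0 with ha0 | ha0
    · have hga : gf x a = 0 := by rw [gf, if_pos ha0]
      have ha' : a = 0 := le_antisymm ha0 ha
      rw [hga, hgb, ha']
      exact ⟨(hpos 1).le, by linarith⟩
    rcases le_or_gt (x 0) a with hatop | halt
    · have hga : gf x a = x 1 := by rw [gf, if_neg (not_le.2 ha0), if_pos hatop]
      rw [hga, hgb]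
      exact ⟨le_rfl, by linarith⟩
    · obtain ⟨k, hk1, hk2⟩ := exists_piece hanti hlim ha0 halt
      obtain ⟨⟨hag1, hag2⟩, hag3, hag4⟩ := gf_bounds hanti hlim hgaps hk1 hk2
      have hk1' : x (k+1) ≤ x 1 := hxa (by omega)
      have hd0 : x k - x (k+1) ≤ x 0 - x 1 := danti (Nat.zero_le k)
      rw [hgb]
      exact ⟨le_of_lt (lt_of_lt_of_le hag2 hk1'), by linarith⟩
  · have hb0 : 0 < b := lt_of_le_of_lt ha hab
    obtain ⟨l, hl1, hl2⟩ := exists_piece hanti hlim hb0 hblt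
    obtain ⟨⟨hbg1, hbg2⟩, hbg3, hbg4⟩ := gf_bounds hanti hlim hgaps hl1 hl2
    rcases le_or_gt a 0 with ha0 | ha0
    · have hga : gf x a = 0 := by rw [gf, if_pos ha0]
      have ha' : a = 0 := le_antisymm ha0 ha
      have hE : 0 < x (l+1) - x (l+2) := sub_pos.2 (hanti (Nat.lt_succ_self (l+1)))
      rw [hga, ha']
      exact ⟨le_trans (hpos (l+2)).le hbg1, by linarith⟩
    · have halt : a < x 0 := hab.trans hblt
      obtain ⟨k, hk1, hk2⟩ := exists_piece hanti hlim ha0 halt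
      obtain ⟨⟨hag1, hag2⟩, hag3, hag4⟩ := gf_bounds hanti hlim hgaps hk1 hk2
      have hlk : l ≤ k := by
        by_contra hc
        push_neg at hc
        have : x l ≤ x (k+1) := hxa (by omega)
        linarith
      rcases eq_or_lt_of_le hlk with rfl | hlk'
      · rw [gf_eq hanti hlim hk1 hk2, gf_eq hanti hlim hl1 hl2]
        have hD : 0 < x l - x (l+1) := sub_pos.2 (hanti (Nat.lt_succ_self l))
        have hE : 0 < x (l+1) - x (l+2) := sub_pos.2 (hanti (Nat.lt_succ_self (l+1)))
        have hED : x (l+1) - x (l+2) < x l - x (l+1) := hgaps l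
        have hs0 : 0 < (x (l+1) - x (l+2)) / (x l - x (l+1)) := div_pos hE hD
        have hs1 : (x (l+1) - x (l+2)) / (x l - x (l+1)) < 1 := (div_lt_one hD).2 hED
        constructor
        · have := mul_le_mul_of_nonneg_left (by linarith : a - x (l+1) ≤ b - x (l+1)) hs0.le
          linarith
        · have := mul_lt_mul_of_pos_left (by linarith : a - x (l+1) < b - x (l+1)) hs0
          nlinarith [mul_lt_mul_of_pos_right hs1 (by linarith : (0:ℝ) < b - a)]
      · constructor
        · exact le_of_lt (lt_of_lt_of_le hag2 (le_trans (hxa (by omega : l+2 ≤ k+1)) hbg1))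
        · exact lt_of_lt_of_le hag4 (le_trans (danti (by omega : l+1 ≤ k)) hbg3)

end Stmt16Aux

theorem stmt16 (x : ℕ → ℝ) (hx : ∀ n, x n ∈ Set.Icc (0:ℝ) 1)
    (hanti : StrictAnti x) (hlim : Tendsto x atTop (𝓝 0))
    (hgaps : ∀ n, x n - x (n + 1) > x (n + 1) - x (n + 2)) :
    ∃ g : ℝ → ℝ, Set.MapsTo g (Set.Icc 0 1) (Set.Icc 0 1) ∧
      (∀ a ∈ Set.Icc (0:ℝ) 1, ∀ b ∈ Set.Icc (0:ℝ) 1, a ≠ b → |g a - g b| < |a - b|) ∧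
      (∀ n, g (x n) = x (n + 1)) ∧ g 0 = 0 ∧
      ({0} ∪ Set.range x : Set ℝ) =
        g '' ({0} ∪ Set.range x) ∪ (fun _ => x 0) '' ({0} ∪ Set.range x) := by
  have hpos := Stmt16Aux.xpos hanti hlim
  refine ⟨Stmt16Aux.gf x, ?_, ?_, ?_, ?_, ?_⟩
  · -- MapsTo
    intro t ht
    by_cases h0 : t ≤ 0
    · rw [Stmt16Aux.gf, if_pos h0]; exact ⟨le_rfl, zero_le_one⟩
    by_cases h1 : x 0 ≤ t
    · rw [Stmt16Aux.gf, if_neg h0, if_pos h1]; exact hx 1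
    · obtain ⟨m, hm1, hm2⟩ :=
        Stmt16Aux.exists_piece hanti hlim (not_le.1 h0) (not_le.1 h1)
      obtain ⟨⟨hg1, hg2⟩, _⟩ := Stmt16Aux.gf_bounds hanti hlim hgaps hm1 hm2
      exact ⟨le_trans (hpos (m+2)).le hg1, le_trans hg2.le (hx (m+1)).2⟩
  · -- weak contraction
    intro a ha b hb hne
    rcases hne.lt_or_gt with h | h
    · obtain ⟨h1, h2⟩ := Stmt16Aux.key hanti hlim hgaps ha.1 h
      rw [abs_sub_comm a b, abs_of_nonneg (by linarith : (0:ℝ) ≤ b - a),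
        abs_sub_comm, abs_of_nonneg (sub_nonneg.2 h1)]
      linarith
    · obtain ⟨h1, h2⟩ := Stmt16Aux.key hanti hlim hgaps hb.1 h
      rw [abs_of_nonneg (by linarith : (0:ℝ) ≤ a - b),
        abs_of_nonneg (sub_nonneg.2 h1)]
      linarith
  · -- g (x n) = x (n+1)
    intro n
    match n with
    | 0 =>
      rw [Stmt16Aux.gf, if_neg (not_le.2 (hpos 0)), if_pos le_rfl]
    | m + 1 =>
      rw [Stmt16Aux.gf_eq hanti hlim le_rfl (hanti (Nat.lt_succ_self m))]
      ring_nf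
  · -- g 0 = 0
    rw [Stmt16Aux.gf, if_pos le_rfl]
  · -- attractor equation
    have g0 : Stmt16Aux.gf x 0 = 0 := by rw [Stmt16Aux.gf, if_pos le_rfl]
    have gx : ∀ n, Stmt16Aux.gf x (x n) = x (n+1) := by
      intro n
      match n with
      | 0 => rw [Stmt16Aux.gf, if_neg (not_le.2 (hpos 0)), if_pos le_rfl]
      | m + 1 =>
        rw [Stmt16Aux.gf_eq hanti hlim le_rfl (hanti (Nat.lt_succ_self m))]
        ring_nf
    apply Subset.antisymm
    · rintro y (rfl | ⟨n, rfl⟩)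
      · exact Or.inl ⟨0, Or.inl rfl, g0⟩
      · match n with
        | 0 => exact Or.inr ⟨0, Or.inl rfl, rfl⟩
        | m + 1 => exact Or.inl ⟨x m, Or.inr ⟨m, rfl⟩, gx m⟩
    · rintro y (⟨z, hz, rfl⟩ | ⟨z, hz, rfl⟩)
      · rcases hz with rfl | ⟨n, rfl⟩
        · exact Or.inl g0
        · exact Or.inr ⟨n+1, (gx n).symm⟩
      · exact Or.inr ⟨0, rfl⟩
end
end
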